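/- Let U ⊆ ℝ² be open, X : U → ℝ³ a C³ immersion with ⟨∂_s X, ∂_t X⟩ = 0, N := (∂_s X × ∂_t X)/|∂_s X × ∂_t X|, and suppose the coordinates are curvature lines: ∂_s N = λ ∂_s X, ∂_t N = μ ∂_t X. Let h : U → ℝ be C². For ε near 0 set Xᵉ := X + ε h N, Nᵉ := (∂_s Xᵉ × ∂_t Xᵉ)/|∂_s Xᵉ × ∂_t Xᵉ|, Yᵉ := Xᵉ − ⟨Xᵉ, Nᵉ⟩Nᵉ, and X̄ᵉ := (Nᵉ, Yᵉ); let V̄ := d/dε|_{ε=0} X̄ᵉ = (V̄₁, V̄₂) and X̄ := X̄⁰. Then at every point of U: Ω(V̄, ∂_s X̄) = ∂_s h and Ω(V̄, ∂_t X̄) = ∂_t h, where Ω(ξ,η) := ⟨ξ₂ − ⟨ξ₂,N⟩N, η₁⟩ − ⟨ξ₁, η₂ − ⟨η₂,N⟩N⟩. (This says the deformation of the normal congruence induced by the normal deformation h N of the surface is Hamiltonian, with Hamiltonian function h.) -/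

import Mathlib

noncomputable section

open Real

/-- Partial derivative of `f : ℝ² → E` in the first coordinate direction (the `s`-direction). -/
def pd1 {E : Type*} [NormedAddCommGroup E] [NormedSpace ℝ E]
    (f : ℝ × ℝ → E) (p : ℝ × ℝ) : E := fderiv ℝ f p (1, 0)

/-- Partial derivative of `f : ℝ² → E` in the second coordinate direction (the `t`-direction). -/
def pd2 {E : Type*} [NormedAddCommGroup E] [NormedSpace ℝ E]
    (f : ℝ × ℝ → E) (p : ℝ × ℝ) : E := fderiv ℝ f p (0, 1)

/-- Euclidean inner product on ℝ³. -/
def dot3 (v w : Fin 3 → ℝ) : ℝ := v 0 * w 0 + v 1 * w 1 + v 2 * w 2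

/-- Cross product on ℝ³. -/
def cross3 (v w : Fin 3 → ℝ) : Fin 3 → ℝ :=
  ![v 1 * w 2 - v 2 * w 1, v 2 * w 0 - v 0 * w 2, v 0 * w 1 - v 1 * w 0]

/-- Euclidean norm on ℝ³. -/
def norm3 (v : Fin 3 → ℝ) : ℝ := Real.sqrt (dot3 v v)

/-- Normalization of a vector of ℝ³. -/
def unit3 (v : Fin 3 → ℝ) : Fin 3 → ℝ := (norm3 v)⁻¹ • v

/-- The canonical symplectic form of `TS²` at the point `(N,·)`, evaluated on tangent
vectors written as pairs `ξ = (Pξ, ξ₂)`: `Ω(ξ,η) = ⟨Kξ, Pη⟩ − ⟨Pξ, Kη⟩`, where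
`Kξ = ξ₂ − ⟨ξ₂,N⟩N`. -/
def Ωcong (N : Fin 3 → ℝ) (ξ η : (Fin 3 → ℝ) × (Fin 3 → ℝ)) : ℝ :=
  dot3 (ξ.2 - dot3 ξ.2 N • N) η.1 - dot3 ξ.1 (η.2 - dot3 η.2 N • N)

/-! ### Algebraic lemmas -/

lemma dot3_comm (v w : Fin 3 → ℝ) : dot3 v w = dot3 w v := by simp [dot3]; ring
lemma dot3_add_left (u v w : Fin 3 → ℝ) : dot3 (u + v) w = dot3 u w + dot3 v w := by
  simp [dot3]; ring
lemma dot3_add_right (u v w : Fin 3 → ℝ) : dot3 u (v + w) = dot3 u v + dot3 u w := by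
  simp [dot3]; ring
lemma dot3_sub_left (u v w : Fin 3 → ℝ) : dot3 (u - v) w = dot3 u w - dot3 v w := by
  simp [dot3]; ring
lemma dot3_sub_right (u v w : Fin 3 → ℝ) : dot3 u (v - w) = dot3 u v - dot3 u w := by
  simp [dot3]; ring
lemma dot3_smul_left (r : ℝ) (v w : Fin 3 → ℝ) : dot3 (r • v) w = r * dot3 v w := by
  simp [dot3]; ring
lemma dot3_smul_right (r : ℝ) (v w : Fin 3 → ℝ) : dot3 v (r • w) = r * dot3 v w := by
  simp [dot3]; ring

lemma cross3_add_left (u v w : Fin 3 → ℝ) : cross3 (u + v) w = cross3 u w + cross3 v w := by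
  funext i; fin_cases i <;> simp [cross3] <;> ring
lemma cross3_add_right (u v w : Fin 3 → ℝ) : cross3 u (v + w) = cross3 u v + cross3 u w := by
  funext i; fin_cases i <;> simp [cross3] <;> ring
lemma cross3_smul_left (r : ℝ) (v w : Fin 3 → ℝ) : cross3 (r • v) w = r • cross3 v w := by
  funext i; fin_cases i <;> simp [cross3] <;> ring
lemma cross3_smul_right (r : ℝ) (v w : Fin 3 → ℝ) : cross3 v (r • w) = r • cross3 v w := by
  funext i; fin_cases i <;> simp [cross3] <;> ring

lemma dot3_cross_left (u v : Fin 3 → ℝ) : dot3 (cross3 u v) u = 0 := by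
  simp [dot3, cross3]; ring
lemma dot3_cross_right (u v : Fin 3 → ℝ) : dot3 (cross3 u v) v = 0 := by
  simp [dot3, cross3]; ring
lemma triple1 (u v : Fin 3 → ℝ) :
    dot3 (cross3 (cross3 u v) v) u = -(dot3 (cross3 u v) (cross3 u v)) := by
  simp [dot3, cross3]; ring
lemma triple2 (u v : Fin 3 → ℝ) :
    dot3 (cross3 u (cross3 u v)) v = -(dot3 (cross3 u v) (cross3 u v)) := by
  simp [dot3, cross3]; ring

lemma dot3_self_nonneg (v : Fin 3 → ℝ) : 0 ≤ dot3 v v := by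
  simp only [dot3]
  nlinarith [sq_nonneg (v 0), sq_nonneg (v 1), sq_nonneg (v 2)]

lemma dot3_self_pos {v : Fin 3 → ℝ} (hv : v ≠ 0) : 0 < dot3 v v := by
  rcases (dot3_self_nonneg v).lt_or_eq with h | h
  · exact h
  · exfalso; apply hv; funext i
    have h0 : v 0 ^ 2 + v 1 ^ 2 + v 2 ^ 2 = 0 := by simp [dot3] at h; nlinarith [h]
    have : v 0 = 0 ∧ v 1 = 0 ∧ v 2 = 0 := by
      refine ⟨?_, ?_, ?_⟩ <;> nlinarith [sq_nonneg (v 0), sq_nonneg (v 1), sq_nonneg (v 2)]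
    fin_cases i <;> simp [this.1, this.2.1, this.2.2]

lemma norm3_pos {v : Fin 3 → ℝ} (hv : v ≠ 0) : 0 < norm3 v :=
  Real.sqrt_pos.mpr (dot3_self_pos hv)
lemma norm3_sq {v : Fin 3 → ℝ} : norm3 v ^ 2 = dot3 v v :=
  Real.sq_sqrt (dot3_self_nonneg v)

/-! ### fderiv helper lemmas -/

abbrev prj (i : Fin 3) : (Fin 3 → ℝ) →L[ℝ] ℝ :=
  ContinuousLinearMap.proj (R := ℝ) (φ := fun _ : Fin 3 => ℝ) i

lemma fd_add {f g : ℝ × ℝ → Fin 3 → ℝ} {p : ℝ × ℝ} (hf : DifferentiableAt ℝ f p)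
    (hg : DifferentiableAt ℝ g p) (v : ℝ × ℝ) :
    fderiv ℝ (fun q => f q + g q) p v = fderiv ℝ f p v + fderiv ℝ g p v := by
  rw [fderiv_fun_add hf hg]; rfl

lemma fd_sub {f g : ℝ × ℝ → Fin 3 → ℝ} {p : ℝ × ℝ} (hf : DifferentiableAt ℝ f p)
    (hg : DifferentiableAt ℝ g p) (v : ℝ × ℝ) :
    fderiv ℝ (fun q => f q - g q) p v = fderiv ℝ f p v - fderiv ℝ g p v := by
  rw [fderiv_fun_sub hf hg]; rfl

lemma fd_const_smul {g : ℝ × ℝ → Fin 3 → ℝ} {p : ℝ × ℝ} (hg : DifferentiableAt ℝ g p)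
    (c : ℝ) (v : ℝ × ℝ) :
    fderiv ℝ (fun q => c • g q) p v = c • fderiv ℝ g p v := by
  rw [fderiv_fun_const_smul hg c]; rfl

lemma fd_smul {f : ℝ × ℝ → ℝ} {g : ℝ × ℝ → Fin 3 → ℝ} {p : ℝ × ℝ}
    (hf : DifferentiableAt ℝ f p) (hg : DifferentiableAt ℝ g p) (v : ℝ × ℝ) :
    fderiv ℝ (fun q => f q • g q) p v = fderiv ℝ f p v • g p + f p • fderiv ℝ g p v := by
  rw [fderiv_fun_smul hf hg]
  simp [ContinuousLinearMap.add_apply, ContinuousLinearMap.smul_apply,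
    ContinuousLinearMap.smulRight_apply]
  module

lemma hfd_dot3 {f g : ℝ × ℝ → Fin 3 → ℝ} {p : ℝ × ℝ} {F G : ℝ × ℝ →L[ℝ] Fin 3 → ℝ}
    (hf : HasFDerivAt f F p) (hg : HasFDerivAt g G p) :
    HasFDerivAt (fun q => dot3 (f q) (g q))
      ((f p 0 • ((prj 0).comp G) + g p 0 • ((prj 0).comp F)) +
        (f p 1 • ((prj 1).comp G) + g p 1 • ((prj 1).comp F)) +
        (f p 2 • ((prj 2).comp G) + g p 2 • ((prj 2).comp F))) p := by
  have hfi : ∀ i, HasFDerivAt (fun q => f q i) ((prj i).comp F) p :=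
    fun i => (prj i).hasFDerivAt.comp p hf
  have hgi : ∀ i, HasFDerivAt (fun q => g q i) ((prj i).comp G) p :=
    fun i => (prj i).hasFDerivAt.comp p hg
  have hm : ∀ i : Fin 3, HasFDerivAt (fun q => f q i * g q i)
      (f p i • ((prj i).comp G) + g p i • ((prj i).comp F)) p :=
    fun i => (hfi i).mul (hgi i)
  exact ((hm 0).add (hm 1)).add (hm 2)

lemma diff_dot3 {f g : ℝ × ℝ → Fin 3 → ℝ} {p : ℝ × ℝ} (hf : DifferentiableAt ℝ f p)
    (hg : DifferentiableAt ℝ g p) :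
    DifferentiableAt ℝ (fun q => dot3 (f q) (g q)) p :=
  (hfd_dot3 hf.hasFDerivAt hg.hasFDerivAt).differentiableAt

lemma fd_dot3 {f g : ℝ × ℝ → Fin 3 → ℝ} {p : ℝ × ℝ} (hf : DifferentiableAt ℝ f p)
    (hg : DifferentiableAt ℝ g p) (v : ℝ × ℝ) :
    fderiv ℝ (fun q => dot3 (f q) (g q)) p v =
      dot3 (fderiv ℝ f p v) (g p) + dot3 (f p) (fderiv ℝ g p v) := by
  rw [(hfd_dot3 hf.hasFDerivAt hg.hasFDerivAt).fderiv]
  simp [dot3, prj]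
  ring

/-! ### one-variable calculus lemmas -/

lemma hd_dot3 {f g : ℝ → Fin 3 → ℝ} {f' g' : Fin 3 → ℝ} {x : ℝ}
    (hf : HasDerivAt f f' x) (hg : HasDerivAt g g' x) :
    HasDerivAt (fun ε => dot3 (f ε) (g ε)) (dot3 f' (g x) + dot3 (f x) g') x := by
  have hfi := hasDerivAt_pi.mp hf
  have hgi := hasDerivAt_pi.mp hg
  have hm : ∀ i : Fin 3, HasDerivAt (fun ε => f ε i * g ε i)
      (f' i * g x i + f x i * g' i) x := fun i => (hfi i).mul (hgi i)
  have := ((hm 0).fun_add (hm 1)).fun_add (hm 2)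
  refine this.congr_deriv ?_
  simp [dot3]; ring

lemma hasDerivAt_line (u w : Fin 3 → ℝ) :
    HasDerivAt (fun ε : ℝ => u + ε • w) w 0 := by
  rw [hasDerivAt_pi]
  intro i
  have h1 : HasDerivAt (fun ε : ℝ => ε * w i) (w i) 0 := by
    simpa using (hasDerivAt_id (0:ℝ)).mul_const (w i)
  simpa using (hasDerivAt_const (0:ℝ) (u i)).fun_add h1

lemma cross3_expand (a b a' b' : Fin 3 → ℝ) (ε : ℝ) :
    cross3 (a + ε • a') (b + ε • b') =
      cross3 a b + ε • (cross3 a' b + cross3 a b') + (ε * ε) • cross3 a' b' := by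
  funext i; fin_cases i <;>
    simp [cross3, Pi.add_apply, Pi.smul_apply, smul_eq_mul] <;> ring

lemma hasDerivAt_unit3_cross (a b a' b' : Fin 3 → ℝ) (hc : cross3 a b ≠ 0) :
    HasDerivAt (fun ε : ℝ => unit3 (cross3 (a + ε • a') (b + ε • b')))
      ((norm3 (cross3 a b))⁻¹ • ((cross3 a' b + cross3 a b') -
        dot3 (unit3 (cross3 a b)) (cross3 a' b + cross3 a b') • unit3 (cross3 a b))) 0 := by
  set c := cross3 a b with hcdef
  set c' := cross3 a' b + cross3 a b' with hc'def
  set c₂ := cross3 a' b' with hc2def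
  set v : ℝ → Fin 3 → ℝ := fun ε => c + ε • c' + (ε * ε) • c₂ with hvdef
  have hv0 : v 0 = c := by simp [hvdef]
  have hr : (0:ℝ) < norm3 c := norm3_pos hc
  have hQ : (0:ℝ) < dot3 c c := dot3_self_pos hc
  have hv : HasDerivAt v c' 0 := by
    rw [hasDerivAt_pi]
    intro i
    have h1 : HasDerivAt (fun ε : ℝ => ε * c' i) (c' i) 0 := by
      simpa using (hasDerivAt_id (0:ℝ)).mul_const (c' i)
    have h2 : HasDerivAt (fun ε : ℝ => ε * ε * c₂ i) 0 0 := by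
      simpa using ((hasDerivAt_id (0:ℝ)).mul (hasDerivAt_id 0)).mul_const (c₂ i)
    have := ((hasDerivAt_const (0:ℝ) (c i)).fun_add h1).fun_add h2
    simpa [hvdef] using this
  have hP : HasDerivAt (fun ε => dot3 (v ε) (v ε)) (dot3 c' c + dot3 c c') 0 := by
    simpa [hv0] using hd_dot3 hv hv
  have h0' : dot3 (v 0) (v 0) ≠ 0 := by rw [hv0]; exact hQ.ne'
  have hsq := hP.sqrt h0'
  have hs' : Real.sqrt (dot3 (v 0) (v 0)) ≠ 0 := by
    rw [hv0]; exact (Real.sqrt_pos.mpr hQ).ne'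
  have hinv := hsq.fun_inv hs'
  have hmain := hinv.fun_smul hv
  have hfun : (fun ε : ℝ => unit3 (cross3 (a + ε • a') (b + ε • b'))) =
      fun ε => (Real.sqrt (dot3 (v ε) (v ε)))⁻¹ • v ε := by
    funext ε
    rw [show cross3 (a + ε • a') (b + ε • b') = v ε from cross3_expand a b a' b' ε]
    rfl
  rw [hfun]
  refine hmain.congr_deriv ?_
  rw [hv0]
  have hrn : norm3 c = Real.sqrt (dot3 c c) := rfl
  have hcomm : dot3 c' c = dot3 c c' := by simp [dot3]; ring
  have hds : dot3 (unit3 c) c' = (norm3 c)⁻¹ * dot3 c c' := by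
    rw [show unit3 c = (norm3 c)⁻¹ • c from rfl]
    simp [dot3]; ring
  rw [hds, show unit3 c = (norm3 c)⁻¹ • c from rfl, ← hrn, hcomm]
  have hrne : norm3 c ≠ 0 := hr.ne'
  match_scalars <;> field_simp <;> ring
/-- For a C³ immersion `X` with orthogonal curvature-line coordinates, unit normal
`N = (∂_s X × ∂_t X)/|∂_s X × ∂_t X|`, and a C² function `h`, consider the normal
deformation `Xᵉ = X + ε h N` with Gauss map `Nᵉ`, fibre `Yᵉ = Xᵉ − ⟨Xᵉ,Nᵉ⟩Nᵉ` and normal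
congruence `X̄ᵉ = (Nᵉ, Yᵉ)`; let `V̄ = d/dε|₀ X̄ᵉ`. Then `Ω(V̄, ∂_s X̄) = ∂_s h` and
`Ω(V̄, ∂_t X̄) = ∂_t h`: the induced deformation of the normal congruence is Hamiltonian
with Hamiltonian function `h`. -/
theorem normal_deformation_is_hamiltonian (U : Set (ℝ × ℝ)) (hU : IsOpen U)
    (X N : ℝ × ℝ → Fin 3 → ℝ) (lam mu : ℝ × ℝ → ℝ) (h : ℝ × ℝ → ℝ)
    (hX : ContDiffOn ℝ 3 X U) (hh : ContDiffOn ℝ 2 h U)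
    (horth : ∀ p ∈ U, dot3 (pd1 X p) (pd2 X p) = 0)
    (himm : ∀ p ∈ U, cross3 (pd1 X p) (pd2 X p) ≠ 0)
    (hN : ∀ p ∈ U, N p = unit3 (cross3 (pd1 X p) (pd2 X p)))
    (hlam : ∀ p ∈ U, pd1 N p = lam p • pd1 X p)
    (hmu : ∀ p ∈ U, pd2 N p = mu p • pd2 X p)
    (Xe Ne Ye : ℝ → ℝ × ℝ → Fin 3 → ℝ)
    (hXe : ∀ ε q, Xe ε q = X q + (ε * h q) • N q)
    (hNe : ∀ ε q, Ne ε q = unit3 (cross3 (pd1 (Xe ε) q) (pd2 (Xe ε) q)))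
    (hYe : ∀ ε q, Ye ε q = Xe ε q - dot3 (Xe ε q) (Ne ε q) • Ne ε q)
    (Y : ℝ × ℝ → Fin 3 → ℝ) (hY : ∀ q, Y q = X q - dot3 (X q) (N q) • N q) :
    ∀ p ∈ U,
      Ωcong (N p) (deriv (fun ε => Ne ε p) 0, deriv (fun ε => Ye ε p) 0)
          (pd1 N p, pd1 Y p) = pd1 h p ∧
      Ωcong (N p) (deriv (fun ε => Ne ε p) 0, deriv (fun ε => Ye ε p) 0)
          (pd2 N p, pd2 Y p) = pd2 h p := by
  intro p hp
  have hmem : U ∈ nhds p := hU.mem_nhds hp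
  have hXp : ContDiffAt ℝ 3 X p := hX.contDiffAt hmem
  have hhp : ContDiffAt ℝ 2 h p := hh.contDiffAt hmem
  have hdX : DifferentiableAt ℝ X p := hXp.differentiableAt (by norm_num)
  have hdh : DifferentiableAt ℝ h p := hhp.differentiableAt (by norm_num)
  -- regularity of the Gauss map
  have hfd : ContDiffAt ℝ 2 (fun q => fderiv ℝ X q) p := hXp.fderiv_right (by norm_num)
  have hc1 : ContDiffAt ℝ 2 (fun q => pd1 X q) p := hfd.clm_apply contDiffAt_const
  have hc2 : ContDiffAt ℝ 2 (fun q => pd2 X q) p := hfd.clm_apply contDiffAt_const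
  have hcomp1 : ∀ i, ContDiffAt ℝ 2 (fun q => pd1 X q i) p := fun i => contDiffAt_pi.mp hc1 i
  have hcomp2 : ∀ i, ContDiffAt ℝ 2 (fun q => pd2 X q i) p := fun i => contDiffAt_pi.mp hc2 i
  have hC : ContDiffAt ℝ 2 (fun q => cross3 (pd1 X q) (pd2 X q)) p := by
    rw [contDiffAt_pi]
    intro i
    fin_cases i
    · exact ((hcomp1 1).mul (hcomp2 2)).sub ((hcomp1 2).mul (hcomp2 1))
    · exact ((hcomp1 2).mul (hcomp2 0)).sub ((hcomp1 0).mul (hcomp2 2))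
    · exact ((hcomp1 0).mul (hcomp2 1)).sub ((hcomp1 1).mul (hcomp2 0))
  have hCp : cross3 (pd1 X p) (pd2 X p) ≠ 0 := himm p hp
  have hQpos : 0 < dot3 (cross3 (pd1 X p) (pd2 X p)) (cross3 (pd1 X p) (pd2 X p)) :=
    dot3_self_pos hCp
  have hdotC : ContDiffAt ℝ 2
      (fun q => dot3 (cross3 (pd1 X q) (pd2 X q)) (cross3 (pd1 X q) (pd2 X q))) p := by
    have hCi : ∀ i, ContDiffAt ℝ 2 (fun q => cross3 (pd1 X q) (pd2 X q) i) p :=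
      contDiffAt_pi.mp hC
    exact (((hCi 0).mul (hCi 0)).add ((hCi 1).mul (hCi 1))).add ((hCi 2).mul (hCi 2))
  have hsqrtC : ContDiffAt ℝ 2
      (fun q => Real.sqrt (dot3 (cross3 (pd1 X q) (pd2 X q)) (cross3 (pd1 X q) (pd2 X q)))) p :=
    (Real.contDiffAt_sqrt hQpos.ne').comp p hdotC
  have hinvC : ContDiffAt ℝ 2
      (fun q => (Real.sqrt (dot3 (cross3 (pd1 X q) (pd2 X q)) (cross3 (pd1 X q) (pd2 X q))))⁻¹)
      p := hsqrtC.inv (Real.sqrt_pos.mpr hQpos).ne'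
  have hg : ContDiffAt ℝ 2 (fun q => unit3 (cross3 (pd1 X q) (pd2 X q))) p := hinvC.smul hC
  have hNg : N =ᶠ[nhds p] fun q => unit3 (cross3 (pd1 X q) (pd2 X q)) := by
    filter_upwards [hmem] with q hq
    exact hN q hq
  have hdN : DifferentiableAt ℝ N p :=
    (hg.differentiableAt (by norm_num)).congr_of_eventuallyEq hNg
  -- abbreviations
  set a := pd1 X p with ha
  set b := pd2 X p with hb
  set c := cross3 a b with hc
  set n := N p with hn0
  set xx := X p with hxx
  have hn : n = unit3 c := hN p hp
  have hcne : c ≠ 0 := himm p hp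
  have hr : (0:ℝ) < norm3 c := norm3_pos hcne
  have hrne : norm3 c ≠ 0 := hr.ne'
  have hun : unit3 c = (norm3 c)⁻¹ • c := rfl
  set a' : Fin 3 → ℝ := pd1 h p • n + h p • (lam p • a) with ha'
  set b' : Fin 3 → ℝ := pd2 h p • n + h p • (mu p • b) with hb'
  set c' : Fin 3 → ℝ := cross3 a' b + cross3 a b' with hc'
  set V : Fin 3 → ℝ := (norm3 c)⁻¹ • (c' - dot3 (unit3 c) c' • unit3 c) with hV
  have hdG : DifferentiableAt ℝ (fun q => h q • N q) p := hdh.smul hdN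
  -- the deformed partial derivatives
  have e1 : ∀ ε : ℝ, pd1 (Xe ε) p = a + ε • a' := by
    intro ε
    have hXef : Xe ε = fun q => X q + ε • (h q • N q) := by
      funext q; rw [hXe, mul_smul]
    show fderiv ℝ (Xe ε) p (1, 0) = a + ε • a'
    rw [hXef, fd_add hdX (hdG.fun_const_smul ε) (1, 0), fd_const_smul hdG ε (1, 0),
      fd_smul hdh hdN (1, 0), show fderiv ℝ N p (1, 0) = pd1 N p from rfl, hlam p hp]
    rfl
  have e2 : ∀ ε : ℝ, pd2 (Xe ε) p = b + ε • b' := by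
    intro ε
    have hXef : Xe ε = fun q => X q + ε • (h q • N q) := by
      funext q; rw [hXe, mul_smul]
    show fderiv ℝ (Xe ε) p (0, 1) = b + ε • b'
    rw [hXef, fd_add hdX (hdG.fun_const_smul ε) (0, 1), fd_const_smul hdG ε (0, 1),
      fd_smul hdh hdN (0, 1), show fderiv ℝ N p (0, 1) = pd2 N p from rfl, hmu p hp]
    rfl
  -- derivative of the Gauss map deformation
  have hNep : (fun ε => Ne ε p) = fun ε => unit3 (cross3 (a + ε • a') (b + ε • b')) := by
    funext ε; rw [hNe ε p, e1 ε, e2 ε]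
  have hFder : HasDerivAt (fun ε => Ne ε p) V 0 := by
    rw [hNep]; exact hasDerivAt_unit3_cross a b a' b' hcne
  have hdNeval : deriv (fun ε => Ne ε p) 0 = V := hFder.deriv
  -- derivative of the fibre deformation
  have hXep : ∀ ε : ℝ, Xe ε p = xx + ε • (h p • n) := by
    intro ε; rw [hXe, mul_smul]
  have hYep : (fun ε => Ye ε p) = fun ε =>
      (xx + ε • (h p • n)) -
        dot3 (xx + ε • (h p • n)) (unit3 (cross3 (a + ε • a') (b + ε • b'))) •
          unit3 (cross3 (a + ε • a') (b + ε • b')) := by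
    funext ε
    rw [hYe ε p, hXep ε, congrFun hNep ε]
  have hF := hasDerivAt_unit3_cross a b a' b' hcne
  have hF0 : unit3 (cross3 (a + (0:ℝ) • a') (b + (0:ℝ) • b')) = unit3 c := by
    rw [zero_smul, zero_smul, add_zero, add_zero]
  have hL := hasDerivAt_line xx (h p • n)
  have hdotD : HasDerivAt
      (fun ε : ℝ => dot3 (xx + ε • (h p • n)) (unit3 (cross3 (a + ε • a') (b + ε • b'))))
      (dot3 (h p • n) (unit3 c) + dot3 xx V) 0 := by
    have := hd_dot3 hL hF
    simpa [hF0] using this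
  have hsm : HasDerivAt
      (fun ε : ℝ => dot3 (xx + ε • (h p • n)) (unit3 (cross3 (a + ε • a') (b + ε • b'))) •
        unit3 (cross3 (a + ε • a') (b + ε • b')))
      ((dot3 xx (unit3 c)) • V + (dot3 (h p • n) (unit3 c) + dot3 xx V) • unit3 c) 0 := by
    have := hdotD.fun_smul hF
    simpa [hF0] using this
  have hYder : HasDerivAt (fun ε => Ye ε p)
      (h p • n - ((dot3 xx (unit3 c)) • V +
        (dot3 (h p • n) (unit3 c) + dot3 xx V) • unit3 c)) 0 := by
    rw [hYep]
    exact hL.sub hsm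
  rw [← hn] at hYder
  set W : Fin 3 → ℝ :=
    h p • n - ((dot3 xx n) • V + (dot3 (h p • n) n + dot3 xx V) • n) with hW
  have hdYeval : deriv (fun ε => Ye ε p) 0 = W := hYder.deriv
  -- partial derivatives of Y
  have hYfun : Y = fun q => X q - dot3 (X q) (N q) • N q := funext fun q => hY q
  have hdS : DifferentiableAt ℝ (fun q => dot3 (X q) (N q)) p := diff_dot3 hdX hdN
  have hpd1Y : pd1 Y p =
      a - ((dot3 a n + dot3 xx (lam p • a)) • n + dot3 xx n • (lam p • a)) := by
    show fderiv ℝ Y p (1, 0) = _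
    rw [hYfun, fd_sub hdX (hdS.fun_smul hdN) (1, 0), fd_smul hdS hdN (1, 0),
      fd_dot3 hdX hdN (1, 0), show fderiv ℝ N p (1, 0) = pd1 N p from rfl, hlam p hp]
    rfl
  have hpd2Y : pd2 Y p =
      b - ((dot3 b n + dot3 xx (mu p • b)) • n + dot3 xx n • (mu p • b)) := by
    show fderiv ℝ Y p (0, 1) = _
    rw [hYfun, fd_sub hdX (hdS.fun_smul hdN) (0, 1), fd_smul hdS hdN (0, 1),
      fd_dot3 hdX hdN (0, 1), show fderiv ℝ N p (0, 1) = pd2 N p from rfl, hmu p hp]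
    rfl
  -- dot-product facts
  have hdnn : dot3 n n = 1 := by
    rw [hn, hun, dot3_smul_left, dot3_smul_right, ← norm3_sq]
    field_simp
  have hdna : dot3 n a = 0 := by
    rw [hn, hun, dot3_smul_left, hc, dot3_cross_left, mul_zero]
  have hdan : dot3 a n = 0 := by rw [dot3_comm]; exact hdna
  have hdnb : dot3 n b = 0 := by
    rw [hn, hun, dot3_smul_left, hc, dot3_cross_right, mul_zero]
  have hdbn : dot3 b n = 0 := by rw [dot3_comm]; exact hdnb
  have hVa : dot3 V a = -(pd1 h p) := by
    rw [hV, hun, hc', ha', hb', hn, hun, hc]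
    simp only [cross3_add_left, cross3_add_right, cross3_smul_left, cross3_smul_right,
      dot3_add_left, dot3_add_right, dot3_sub_left, dot3_sub_right,
      dot3_smul_left, dot3_smul_right, dot3_cross_left, dot3_cross_right,
      triple1, triple2, mul_zero, zero_mul, add_zero, zero_add, mul_neg, neg_mul, sub_zero]
    rw [← hc, ← norm3_sq]
    field_simp
    try ring
    try exact Or.inl trivial
  have hVb : dot3 V b = -(pd2 h p) := by
    rw [hV, hun, hc', ha', hb', hn, hun, hc]
    simp only [cross3_add_left, cross3_add_right, cross3_smul_left, cross3_smul_right,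
      dot3_add_left, dot3_add_right, dot3_sub_left, dot3_sub_right,
      dot3_smul_left, dot3_smul_right, dot3_cross_left, dot3_cross_right,
      triple1, triple2, mul_zero, zero_mul, add_zero, zero_add, mul_neg, neg_mul, sub_zero]
    rw [← hc, ← norm3_sq]
    field_simp
    try ring
    try exact Or.inl trivial
  have hVn : dot3 V n = 0 := by
    rw [hV, hn, hun]
    simp only [dot3_sub_left, dot3_smul_left, dot3_smul_right]
    rw [dot3_comm c' c, ← norm3_sq]
    field_simp
    ring
  -- conclusion
  constructor
  · rw [hdNeval, hdYeval, hpd1Y, hlam p hp]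
    show dot3 (W - dot3 W n • n) (lam p • a) - dot3 V
      ((a - ((dot3 a n + dot3 xx (lam p • a)) • n + dot3 xx n • (lam p • a))) -
        dot3 ((a - ((dot3 a n + dot3 xx (lam p • a)) • n + dot3 xx n • (lam p • a)))) n • n)
      = pd1 h p
    rw [hW]
    simp only [dot3_add_left, dot3_add_right, dot3_sub_left, dot3_sub_right,
      dot3_smul_left, dot3_smul_right, hdnn, hdna, hdan, hVa, hVn]
    ring
  · rw [hdNeval, hdYeval, hpd2Y, hmu p hp]
    show dot3 (W - dot3 W n • n) (mu p • b) - dot3 V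
      ((b - ((dot3 b n + dot3 xx (mu p • b)) • n + dot3 xx n • (mu p • b))) -
        dot3 ((b - ((dot3 b n + dot3 xx (mu p • b)) • n + dot3 xx n • (mu p • b)))) n • n)
      = pd2 h p
    rw [hW]
    simp only [dot3_add_left, dot3_add_right, dot3_sub_left, dot3_sub_right,
      dot3_smul_left, dot3_smul_right, hdnn, hdnb, hdbn, hVb, hVn]
    ring
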